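/- Let d ≥ 1 be an integer and let δ > 1. Then there exist constants 0 < c' ≤ C' < ∞ (depending only on d and δ) such that for every r ≥ 2 one has c'·(log r)^{1/δ} ≤ ∫_{ℝ^d} min(|z|^{−dδ}(1 + log₊(r^d |z|^{dδ})), 1) dz ≤ C'·(log r)^{1/δ}, where the integrand is interpreted as 1 at z = 0 (a Lebesgue-null set). -/

import Mathlib

set_option maxHeartbeats 2000000

open MeasureTheory Real Set

private lemma aux_one_dim (d : ℕ) (hd : 1 ≤ d) (δ : ℝ) (hδ : 1 < δ) :
    ∃ c₁ C₁ : ℝ, 0 < c₁ ∧ c₁ ≤ C₁ ∧ ∀ r : ℝ, 2 ≤ r →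
      c₁ * Real.log r ^ (1 / δ) ≤
        (∫ y in Ioi (0:ℝ), y ^ (d - 1) •
          min (y ^ (-((d : ℝ) * δ)) * (1 + max (Real.log (r ^ d * y ^ ((d : ℝ) * δ))) 0)) 1) ∧
      (∫ y in Ioi (0:ℝ), y ^ (d - 1) •
          min (y ^ (-((d : ℝ) * δ)) * (1 + max (Real.log (r ^ d * y ^ ((d : ℝ) * δ))) 0)) 1) ≤
        C₁ * Real.log r ^ (1 / δ) := by
  have hd0 : (0:ℝ) < d := by exact_mod_cast hd
  set D : ℝ := (d : ℝ) * δ with hDdef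
  have hdD : (d:ℝ) < D := by nlinarith
  have hD0 : 0 < D := lt_trans hd0 hdD
  set p : ℝ := D - d with hpdef
  have hp : 0 < p := by simp [hpdef]; linarith
  have hlog2 : 0 < Real.log 2 := Real.log_pos one_lt_two
  have hlog2le1 : Real.log 2 ≤ 1 := by
    have := Real.log_le_sub_one_of_pos (by norm_num : (0:ℝ) < 2); linarith
  set K : ℝ := d + 1 / Real.log 2 with hKdef
  have hd1 : (1:ℝ) ≤ d := by exact_mod_cast hd
  have hK1 : 1 ≤ K := by
    have h0 : 0 < 1 / Real.log 2 := by positivity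
    simp only [hKdef]; linarith
  have hδinv : (0:ℝ) ≤ 1/δ := le_of_lt (one_div_pos.mpr (by linarith))
  have hδne : δ ≠ 0 := by linarith
  have hdne : (d:ℝ) ≠ 0 := hd0.ne'
  clear_value D p K
  have hKδ : 1 ≤ K ^ (1/δ) := Real.one_le_rpow hK1 hδinv
  refine ⟨1/(d:ℝ), (1/d + 1/p) * K ^ (1/δ) + (4*D/p^2)/Real.log 2, one_div_pos.mpr hd0, ?_, ?_⟩
  · have hp' : 0 < 1/p := one_div_pos.mpr hp
    have hd' : 0 < 1/(d:ℝ) := one_div_pos.mpr hd0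
    have h4 : 0 < (4*D/p^2)/Real.log 2 :=
      div_pos (div_pos (by linarith) (pow_pos hp 2)) hlog2
    nlinarith [mul_le_mul_of_nonneg_left hKδ (le_of_lt (add_pos hd' hp'))]
  intro r hr
  have hr0 : (0:ℝ) < r := by linarith
  set L : ℝ := Real.log r with hLdef
  have hL2 : Real.log 2 ≤ L := Real.log_le_log (by norm_num) hr
  have hL0 : 0 < L := lt_of_lt_of_le hlog2 hL2
  clear_value L
  set g : ℝ → ℝ := fun y =>
    min (y ^ (-D) * (1 + max (Real.log (r ^ d * y ^ D)) 0)) 1 with hgdef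
  set F : ℝ → ℝ := fun y => y ^ (d - 1) * g y with hFdef
  have hrw : (∫ y in Ioi (0:ℝ), y ^ (d - 1) •
        min (y ^ (-D) * (1 + max (Real.log (r ^ d * y ^ D)) 0)) 1)
      = ∫ y in Ioi (0:ℝ), F y := by
    simp only [hFdef, hgdef, smul_eq_mul]
  rw [hrw]
  -- basic bounds on g
  have hgle1 : ∀ y : ℝ, g y ≤ 1 := fun y => min_le_right _ _
  have hg0 : ∀ y : ℝ, 0 ≤ y → 0 ≤ g y := by
    intro y hy
    refine le_min (mul_nonneg (Real.rpow_nonneg hy _) ?_) zero_le_one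
    have := le_max_right (Real.log (r ^ d * y ^ D)) 0
    linarith
  have hF0 : ∀ y : ℝ, 0 ≤ y → 0 ≤ F y := fun y hy =>
    mul_nonneg (pow_nonneg hy _) (hg0 y hy)
  have hgcont : ContinuousOn g (Ioi (0:ℝ)) := by
    have h1 : ContinuousOn (fun y : ℝ => y ^ (-D)) (Ioi 0) := fun y hy =>
      (Real.continuousAt_rpow_const y _ (Or.inl hy.out.ne')).continuousWithinAt
    have h2 : ContinuousOn (fun y : ℝ => y ^ D) (Ioi 0) := fun y hy =>
      (Real.continuousAt_rpow_const y _ (Or.inl hy.out.ne')).continuousWithinAt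
    have h3 : ContinuousOn (fun y : ℝ => Real.log (r ^ d * y ^ D)) (Ioi 0) := by
      apply ContinuousOn.log (continuousOn_const.mul h2)
      intro y hy
      have h4 : 0 < y ^ D := Real.rpow_pos_of_pos hy _
      exact (mul_pos (pow_pos hr0 d) h4).ne'
    intro y hy
    exact ((h1 y hy).mul (((h3 y hy).max continuousWithinAt_const).const_add 1)).min
      continuousWithinAt_const
  have hFcont : ContinuousOn F (Ioi (0:ℝ)) := (continuous_pow _).continuousOn.mul hgcont
  have hFae : AEStronglyMeasurable F (volume.restrict (Ioi (0:ℝ))) :=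
    hFcont.aestronglyMeasurable measurableSet_Ioi
  -- the log expansion
  have hlogexp : ∀ y : ℝ, 0 < y →
      Real.log (r ^ d * y ^ D) = d * L + D * Real.log y := by
    intro y hy
    rw [Real.log_mul (pow_pos hr0 d).ne' (Real.rpow_pos_of_pos hy _).ne',
      Real.log_pow, Real.log_rpow hy, hLdef]
  -- R : inner radius
  have hdL0 : (0:ℝ) < d * L := mul_pos hd0 hL0
  set R : ℝ := ((d:ℝ) * L) ^ (1/D) with hRdef
  clear_value R
  have hR0 : 0 < R := by rw [hRdef]; exact Real.rpow_pos_of_pos hdL0 _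
  have hRD : R ^ D = (d:ℝ) * L := by
    rw [hRdef, ← Real.rpow_mul hdL0.le, one_div, inv_mul_cancel₀ hD0.ne', Real.rpow_one]
  have hg_one : ∀ y ∈ Ioc (0:ℝ) R, g y = 1 := by
    rintro y ⟨hy0, hyR⟩
    have hyD : 0 < y ^ D := Real.rpow_pos_of_pos hy0 _
    apply min_eq_right
    rw [Real.rpow_neg hy0.le, le_inv_mul_iff₀ hyD, mul_one]
    rcases le_or_gt y 1 with h1 | h1
    · have h2 : y ^ D ≤ 1 := Real.rpow_le_one hy0.le h1 hD0.le
      have h3 := le_max_right (Real.log (r ^ d * y ^ D)) 0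
      linarith
    · have h2 : y ^ D ≤ (d:ℝ) * L := by
        calc y ^ D ≤ R ^ D := Real.rpow_le_rpow hy0.le hyR hD0.le
        _ = _ := hRD
      have h3 : 0 ≤ Real.log y := Real.log_nonneg h1.le
      have h4 := le_max_left (Real.log (r ^ d * y ^ D)) 0
      have h5 := hlogexp y hy0
      nlinarith [mul_nonneg hD0.le h3]
  -- T : outer radius
  set a : ℝ := 1 + (d:ℝ) * L with hadef
  have ha0 : 0 < a := by simp only [hadef]; linarith
  have ha1 : 1 ≤ a := by simp only [hadef]; linarith
  set T : ℝ := a ^ (1/D) with hTdef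
  clear_value T
  have hT0 : 0 < T := by rw [hTdef]; exact Real.rpow_pos_of_pos ha0 _
  have hT1 : 1 ≤ T := by
    rw [hTdef]; exact Real.one_le_rpow ha1 (le_of_lt (one_div_pos.mpr hD0))
  have hTD : T ^ D = a := by
    rw [hTdef, ← Real.rpow_mul ha0.le, one_div, inv_mul_cancel₀ hD0.ne', Real.rpow_one]
  have hRT : R ≤ T := by
    rw [hRdef, hTdef]
    exact Real.rpow_le_rpow hdL0.le (by simp only [hadef]; linarith)
      (le_of_lt (one_div_pos.mpr hD0))
  -- pointwise tail bound
  have htail : ∀ y ∈ Ioi T, F y ≤ a * y ^ (-1 - p) + (2*D/p) * y ^ (-1 - p/2) := by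
    intro y hy
    have hy1 : 1 < y := lt_of_le_of_lt hT1 hy
    have hy0 : 0 < y := lt_trans one_pos hy1
    have hyD : 0 < y ^ D := Real.rpow_pos_of_pos hy0 _
    have hlogy0 : 0 ≤ Real.log y := Real.log_nonneg hy1.le
    have hmax : max (Real.log (r ^ d * y ^ D)) 0 = (d:ℝ) * L + D * Real.log y := by
      rw [max_eq_left, hlogexp y hy0]
      rw [hlogexp y hy0]
      have h5 := mul_nonneg hD0.le hlogy0
      linarith
    have hgb : g y ≤ y ^ (-D) * (a + D * Real.log y) := by
      refine (min_le_left _ _).trans (le_of_eq ?_)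
      rw [hmax, hadef]; ring
    have hlogy : Real.log y ≤ (2/p) * y ^ (p/2) := by
      have h1 : Real.log (y ^ (p/2)) = (p/2) * Real.log y := Real.log_rpow hy0 _
      have h2 : Real.log (y ^ (p/2)) ≤ y ^ (p/2) - 1 :=
        Real.log_le_sub_one_of_pos (Real.rpow_pos_of_pos hy0 _)
      have h3 : 0 ≤ y ^ (p/2) - (p/2) * Real.log y := by linarith
      rw [← sub_nonneg]
      have h4 : (2/p) * y ^ (p/2) - Real.log y = (2/p) * (y ^ (p/2) - (p/2) * Real.log y) := by
        field_simp
      rw [h4]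
      exact mul_nonneg (le_of_lt (div_pos two_pos hp)) h3
    have hcast : y ^ (d - 1) = y ^ ((d:ℝ) - 1) := by
      rw [← Real.rpow_natCast y (d - 1), Nat.cast_sub hd, Nat.cast_one]
    have h1 : y ^ ((d:ℝ) - 1) * y ^ (-D) = y ^ (-1 - p) := by
      rw [← Real.rpow_add hy0]; congr 1; simp only [hpdef]; ring
    have h2 : y ^ (-1 - p) * y ^ (p/2) = y ^ (-1 - p/2) := by
      rw [← Real.rpow_add hy0]; congr 1; ring
    calc F y = y ^ ((d:ℝ) - 1) * g y := by rw [hFdef]; simp only; rw [hcast]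
      _ ≤ y ^ ((d:ℝ) - 1) * (y ^ (-D) * (a + D * ((2/p) * y ^ (p/2)))) := by
          apply mul_le_mul_of_nonneg_left _ (Real.rpow_nonneg hy0.le _)
          refine hgb.trans ?_
          apply mul_le_mul_of_nonneg_left _ (Real.rpow_nonneg hy0.le _)
          have := mul_le_mul_of_nonneg_left hlogy hD0.le
          linarith
      _ = y ^ ((d:ℝ) - 1) * y ^ (-D) * a
            + (2*D/p) * (y ^ ((d:ℝ) - 1) * y ^ (-D) * y ^ (p/2)) := by
          field_simp
      _ = a * y ^ (-1 - p) + (2*D/p) * y ^ (-1 - p/2) := by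
          rw [h1, h2]; ring
  -- integrability
  have he₁ : (-1 - p : ℝ) < -1 := by linarith
  have he₂ : (-1 - p/2 : ℝ) < -1 := by linarith
  have h_int1 : IntegrableOn F (Ioc 0 T) := by
    refine ⟨hFae.mono_measure (Measure.restrict_mono (fun y hy => hy.1) le_rfl),
      HasFiniteIntegral.restrict_of_bounded (C := T ^ (d-1)) measure_Ioc_lt_top ?_⟩
    filter_upwards [ae_restrict_mem measurableSet_Ioc] with y hy
    rw [Real.norm_eq_abs, abs_of_nonneg (hF0 y hy.1.le)]
    calc F y ≤ y ^ (d-1) * 1 :=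
          mul_le_mul_of_nonneg_left (hgle1 y) (pow_nonneg hy.1.le _)
      _ ≤ T ^ (d-1) := by rw [mul_one]; exact pow_le_pow_left₀ hy.1.le hy.2 _
  have h_intb : IntegrableOn (fun y : ℝ => a * y ^ (-1 - p) + (2*D/p) * y ^ (-1 - p/2))
      (Ioi T) := by
    exact ((integrableOn_Ioi_rpow_of_lt he₁ hT0).const_mul a).add
      ((integrableOn_Ioi_rpow_of_lt he₂ hT0).const_mul _)
  have h_int2 : IntegrableOn F (Ioi T) := by
    apply MeasureTheory.Integrable.mono h_intb (hFae.mono_measure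
      (Measure.restrict_mono (fun y hy => lt_trans hT0 hy) le_rfl))
    filter_upwards [ae_restrict_mem measurableSet_Ioi] with y hy
    have hy0 : 0 < y := lt_trans hT0 hy
    rw [Real.norm_eq_abs, abs_of_nonneg (hF0 y hy0.le)]
    exact (htail y hy).trans (le_abs_self _)
  have hIoi : Ioc (0:ℝ) T ∪ Ioi T = Ioi 0 := Ioc_union_Ioi_eq_Ioi hT0.le
  have h_int : IntegrableOn F (Ioi (0:ℝ)) := by
    rw [← hIoi]; exact h_int1.union h_int2
  -- value of ∫_{Ioc 0 b} y^{d-1}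
  have hIoc_val : ∀ b : ℝ, 0 ≤ b → (∫ y in Ioc (0:ℝ) b, y ^ (d-1)) = b ^ d / d := by
    intro b hb
    rw [← intervalIntegral.integral_of_le hb, integral_pow,
      Nat.sub_add_cancel hd, zero_pow (by omega), sub_zero]
    congr 1
    rw [Nat.cast_sub hd]; push_cast; ring
  constructor
  · -- lower bound
    have hsub : Ioc (0:ℝ) R ⊆ Ioi 0 := fun y hy => hy.1
    have hmono : (∫ y in Ioc (0:ℝ) R, F y) ≤ ∫ y in Ioi (0:ℝ), F y := by
      apply setIntegral_mono_set h_int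
      · exact (ae_restrict_iff' measurableSet_Ioi).2 (ae_of_all _ fun y hy => hF0 y hy.le)
      · exact HasSubset.Subset.eventuallyLE hsub
    have hcongr : (∫ y in Ioc (0:ℝ) R, F y) = ∫ y in Ioc (0:ℝ) R, y ^ (d-1) := by
      apply setIntegral_congr_fun measurableSet_Ioc
      intro y hy
      rw [hFdef]; simp only; rw [hg_one y hy, mul_one]
    have hRd : (R:ℝ) ^ d = ((d:ℝ) * L) ^ (1/δ) := by
      rw [hRdef, ← Real.rpow_natCast (((d:ℝ) * L) ^ (1/D)) d, ← Real.rpow_mul hdL0.le]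
      congr 1
      rw [hDdef]
      field_simp
    have hLle : L ^ (1/δ) ≤ ((d:ℝ) * L) ^ (1/δ) := by
      apply Real.rpow_le_rpow hL0.le _ hδinv
      nlinarith
    calc 1/(d:ℝ) * L ^ (1/δ) ≤ 1/(d:ℝ) * ((d:ℝ) * L) ^ (1/δ) :=
          mul_le_mul_of_nonneg_left hLle (one_div_nonneg.mpr hd0.le)
      _ = ((d:ℝ) * L) ^ (1/δ) / d := by ring
      _ = R ^ d / d := by rw [hRd]
      _ = ∫ y in Ioc (0:ℝ) R, y ^ (d-1) := (hIoc_val R hR0.le).symm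
      _ = ∫ y in Ioc (0:ℝ) R, F y := hcongr.symm
      _ ≤ _ := hmono
  · -- upper bound
    have hsplit : (∫ y in Ioi (0:ℝ), F y)
        = (∫ y in Ioc (0:ℝ) T, F y) + ∫ y in Ioi T, F y := by
      rw [← hIoi, setIntegral_union Ioc_disjoint_Ioi_same measurableSet_Ioi h_int1 h_int2]
    have hTd : (T:ℝ) ^ d = a ^ (1/δ) := by
      rw [hTdef, ← Real.rpow_natCast ((a:ℝ) ^ (1/D)) d, ← Real.rpow_mul ha0.le]
      congr 1
      rw [hDdef]
      field_simp
    -- first piece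
    have hup1 : (∫ y in Ioc (0:ℝ) T, F y) ≤ a ^ (1/δ) / d := by
      have h1 : (∫ y in Ioc (0:ℝ) T, F y) ≤ ∫ y in Ioc (0:ℝ) T, y ^ (d-1) := by
        apply setIntegral_mono_on h_int1 _ measurableSet_Ioc
        · intro y hy
          calc F y ≤ y ^ (d-1) * 1 :=
              mul_le_mul_of_nonneg_left (hgle1 y) (pow_nonneg hy.1.le _)
            _ = y ^ (d-1) := mul_one _
        · exact (continuous_pow _).integrableOn_Ioc
      rw [hIoc_val T hT0.le, hTd] at h1
      exact h1
    -- second piece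
    have hup2 : (∫ y in Ioi T, F y)
        ≤ a ^ (1/δ) / p + (4*D/p^2) * T ^ (-(p/2)) := by
      have h1 : (∫ y in Ioi T, F y)
          ≤ ∫ y in Ioi T, (a * y ^ (-1 - p) + (2*D/p) * y ^ (-1 - p/2)) :=
        setIntegral_mono_on h_int2 h_intb measurableSet_Ioi htail
      have h2 : (∫ y in Ioi T, (a * y ^ (-1 - p) + (2*D/p) * y ^ (-1 - p/2)))
          = a * (T ^ (-p) / p) + (2*D/p) * (T ^ (-(p/2)) / (p/2)) := by
        rw [integral_add (((integrableOn_Ioi_rpow_of_lt he₁ hT0).const_mul a))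
          (((integrableOn_Ioi_rpow_of_lt he₂ hT0).const_mul _)),
          integral_const_mul, integral_const_mul,
          integral_Ioi_rpow_of_lt he₁ hT0, integral_Ioi_rpow_of_lt he₂ hT0]
        have e1 : (-1 - p + 1 : ℝ) = -p := by ring
        have e2 : (-1 - p/2 + 1 : ℝ) = -(p/2) := by ring
        rw [e1, e2]
        field_simp
      have h3 : a * T ^ (-p) = a ^ (1/δ) := by
        rw [hTdef, ← Real.rpow_mul ha0.le]
        nth_rewrite 1 [← Real.rpow_one a]
        rw [← Real.rpow_add ha0]
        congr 1
        rw [hpdef, hDdef]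
        field_simp
        try ring
      rw [h2] at h1
      calc (∫ y in Ioi T, F y)
          ≤ a * (T ^ (-p) / p) + (2*D/p) * (T ^ (-(p/2)) / (p/2)) := h1
        _ = (a * T ^ (-p)) / p + (4*D/p^2) * T ^ (-(p/2)) := by field_simp; ring
        _ = a ^ (1/δ) / p + (4*D/p^2) * T ^ (-(p/2)) := by rw [h3]
    -- combine
    have hTp2 : T ^ (-(p/2)) ≤ 1 :=
      Real.rpow_le_one_of_one_le_of_nonpos hT1 (by linarith)
    have haK : a ≤ K * L := by
      have h1L : 1 ≤ (1 / Real.log 2) * L := by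
        rw [div_mul_eq_mul_div, one_mul, le_div_iff₀ hlog2, one_mul]
        exact hL2
      have : K * L = (d:ℝ) * L + (1 / Real.log 2) * L := by rw [hKdef]; ring
      rw [this, hadef]
      linarith
    have haδ : a ^ (1/δ) ≤ K ^ (1/δ) * L ^ (1/δ) := by
      rw [← Real.mul_rpow (by linarith : (0:ℝ) ≤ K) hL0.le]
      exact Real.rpow_le_rpow ha0.le haK hδinv
    have hLlb : Real.log 2 ≤ L ^ (1/δ) := by
      calc Real.log 2 = Real.log 2 ^ (1:ℝ) := (Real.rpow_one _).symm
        _ ≤ Real.log 2 ^ (1/δ) := by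
            apply Real.rpow_le_rpow_of_exponent_ge hlog2 hlog2le1
            rw [div_le_one (by linarith)]; linarith
        _ ≤ L ^ (1/δ) := Real.rpow_le_rpow hlog2.le hL2 hδinv
    have hconst : (4*D/p^2) * T ^ (-(p/2)) ≤ ((4*D/p^2)/Real.log 2) * L ^ (1/δ) := by
      have h40 : (0:ℝ) ≤ 4*D/p^2 := le_of_lt (div_pos (by linarith) (pow_pos hp 2))
      calc (4*D/p^2) * T ^ (-(p/2)) ≤ (4*D/p^2) * 1 :=
            mul_le_mul_of_nonneg_left hTp2 h40
        _ = ((4*D/p^2)/Real.log 2) * Real.log 2 := by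
            rw [div_mul_cancel₀ _ hlog2.ne', mul_one]
        _ ≤ ((4*D/p^2)/Real.log 2) * L ^ (1/δ) :=
            mul_le_mul_of_nonneg_left hLlb (div_nonneg h40 hlog2.le)
    have hadiv : a ^ (1/δ) / d + a ^ (1/δ) / p = (1/d + 1/p) * a ^ (1/δ) := by
      field_simp
    calc (∫ y in Ioi (0:ℝ), F y)
        = (∫ y in Ioc (0:ℝ) T, F y) + ∫ y in Ioi T, F y := hsplit
      _ ≤ a ^ (1/δ) / d + (a ^ (1/δ) / p + (4*D/p^2) * T ^ (-(p/2))) :=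
          add_le_add hup1 hup2
      _ = (1/d + 1/p) * a ^ (1/δ) + (4*D/p^2) * T ^ (-(p/2)) := by
          rw [← hadiv]; ring
      _ ≤ (1/d + 1/p) * (K ^ (1/δ) * L ^ (1/δ)) + ((4*D/p^2)/Real.log 2) * L ^ (1/δ) := by
          apply add_le_add _ hconst
          have hdp : (0:ℝ) ≤ 1/d + 1/p := by
            have := one_div_pos.mpr hp
            have := one_div_pos.mpr hd0
            linarith
          exact mul_le_mul_of_nonneg_left haδ hdp
      _ = ((1/d + 1/p) * K ^ (1/δ) + (4*D/p^2)/Real.log 2) * L ^ (1/δ) := by ring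

/-- Three-edge crossing integral in the boundary regime `δ = 1/γ`:
`∫_{ℝ^d} min(|z|^{-dδ}(1 + log₊(r^d |z|^{dδ})), 1) dz ≍ (log r)^{1/δ}` for `r ≥ 2`.
(At `z = 0`, a Lebesgue-null set, the value of the integrand is immaterial.) -/
theorem stmt_15 (d : ℕ) (hd : 1 ≤ d) (δ : ℝ) (hδ : 1 < δ) :
    ∃ c' C' : ℝ, 0 < c' ∧ c' ≤ C' ∧ ∀ r : ℝ, 2 ≤ r →
      c' * Real.log r ^ (1 / δ) ≤
          (∫ z : EuclideanSpace ℝ (Fin d),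
              min (‖z‖ ^ (-((d : ℝ) * δ)) *
                (1 + max (Real.log (r ^ d * ‖z‖ ^ ((d : ℝ) * δ))) 0)) 1) ∧
      (∫ z : EuclideanSpace ℝ (Fin d),
              min (‖z‖ ^ (-((d : ℝ) * δ)) *
                (1 + max (Real.log (r ^ d * ‖z‖ ^ ((d : ℝ) * δ))) 0)) 1) ≤
          C' * Real.log r ^ (1 / δ) := by
  obtain ⟨c₁, C₁, hc₁, hc₁C₁, hbound⟩ := aux_one_dim d hd δ hδ
  haveI : Nonempty (Fin d) := ⟨⟨0, hd⟩⟩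
  haveI : Nontrivial (EuclideanSpace ℝ (Fin d)) := by
    refine ⟨⟨EuclideanSpace.single ⟨0, hd⟩ (1:ℝ), 0, fun h => ?_⟩⟩
    have h2 := congrArg norm h
    rw [EuclideanSpace.norm_single, norm_zero] at h2
    norm_num at h2
  set κ : ℝ := (volume (Metric.ball (0 : EuclideanSpace ℝ (Fin d)) 1)).toReal with hκdef
  have hκ : 0 < κ := ENNReal.toReal_pos (Metric.measure_ball_pos volume 0 one_pos).ne'
    measure_ball_lt_top.ne
  have hd0 : (0:ℝ) < d := by exact_mod_cast hd
  have hdκ : (0:ℝ) < (d:ℝ) * κ := mul_pos hd0 hκ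
  refine ⟨((d:ℝ) * κ) * c₁, ((d:ℝ) * κ) * C₁, mul_pos hdκ hc₁, ?_, ?_⟩
  · exact mul_le_mul_of_nonneg_left hc₁C₁ hdκ.le
  intro r hr
  obtain ⟨hlow, hhigh⟩ := hbound r hr
  have hpolar : (∫ z : EuclideanSpace ℝ (Fin d),
      min (‖z‖ ^ (-((d : ℝ) * δ)) *
        (1 + max (Real.log (r ^ d * ‖z‖ ^ ((d : ℝ) * δ))) 0)) 1)
      = (Module.finrank ℝ (EuclideanSpace ℝ (Fin d))) •
        ((volume (Metric.ball (0 : EuclideanSpace ℝ (Fin d)) 1)).toReal •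
          ∫ y in Ioi (0:ℝ), y ^ (Module.finrank ℝ (EuclideanSpace ℝ (Fin d)) - 1) •
            min (y ^ (-((d : ℝ) * δ)) *
              (1 + max (Real.log (r ^ d * y ^ ((d : ℝ) * δ))) 0)) 1) :=
    integral_fun_norm_addHaar (volume : Measure (EuclideanSpace ℝ (Fin d)))
      (fun y : ℝ => min (y ^ (-((d : ℝ) * δ)) *
        (1 + max (Real.log (r ^ d * y ^ ((d : ℝ) * δ))) 0)) 1)
  rw [finrank_euclideanSpace_fin] at hpolar
  rw [hpolar, nsmul_eq_mul, smul_eq_mul, ← hκdef]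
  set J : ℝ := ∫ y in Ioi (0:ℝ), y ^ (d - 1) •
      min (y ^ (-((d : ℝ) * δ)) *
        (1 + max (Real.log (r ^ d * y ^ ((d : ℝ) * δ))) 0)) 1 with hJdef
  constructor
  · calc ((d:ℝ) * κ) * c₁ * Real.log r ^ (1/δ)
        = ((d:ℝ) * κ) * (c₁ * Real.log r ^ (1/δ)) := by ring
      _ ≤ ((d:ℝ) * κ) * J := mul_le_mul_of_nonneg_left hlow hdκ.le
      _ = (d:ℝ) * (κ * J) := by ring
  · calc (d:ℝ) * (κ * J) = ((d:ℝ) * κ) * J := by ring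
      _ ≤ ((d:ℝ) * κ) * (C₁ * Real.log r ^ (1/δ)) :=
          mul_le_mul_of_nonneg_left hhigh hdκ.le
      _ = ((d:ℝ) * κ) * C₁ * Real.log r ^ (1/δ) := by ring
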